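/- Let Γ : [x]^ℕ → [ℕ]^{≤ℕ} be a continuous function on the infinite subsets of a fixed infinite x ⊆ ℕ such that no value Γ(y) is a proper initial segment of another value Γ(z) (with respect to increasing enumerations). If Γ(y) is finite for some y ∈ [x]^ℕ, then for every x' ∈ [x]^ℕ there exists x'' ∈ [x]^ℕ with x'' E₀-equivalent to x' (i.e., x'' Δ x' finite) and Γ(x'') = Γ(y). -/

import Mathlib

def toSet (f : ℕ → Bool) : Set ℕ := {n | f n = true}

theorem stmt16 (x : Set ℕ) (hx : x.Infinite)
    (Γ : {f : ℕ → Bool // (toSet f).Infinite ∧ toSet f ⊆ x} → (ℕ → Bool))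
    (hcont : Continuous Γ)
    (hinit : ∀ y z, ¬ (toSet (Γ y) ⊆ toSet (Γ z) ∧ toSet (Γ y) ≠ toSet (Γ z) ∧
      ∀ a ∈ toSet (Γ y), ∀ b ∈ toSet (Γ z) \ toSet (Γ y), a < b))
    (y : {f : ℕ → Bool // (toSet f).Infinite ∧ toSet f ⊆ x})
    (hfin : (toSet (Γ y)).Finite) :
    ∀ x' : {f : ℕ → Bool // (toSet f).Infinite ∧ toSet f ⊆ x},
      ∃ x'' : {f : ℕ → Bool // (toSet f).Infinite ∧ toSet f ⊆ x},
        (symmDiff (toSet x''.1) (toSet x'.1)).Finite ∧ Γ x'' = Γ y := by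
  intro x'
  -- bound on Γ y
  obtain ⟨M, hM⟩ := hfin.bddAbove
  simp only [upperBounds, Set.mem_setOf_eq] at hM
  -- open set of z with Γ z agreeing with Γ y up to M
  set W : Set (ℕ → Bool) := {g | ∀ n ≤ M, g n = Γ y n} with hWdef
  have hW : IsOpen W := by
    have : W = ⋂ n ∈ Finset.range (M+1), (fun g : ℕ → Bool => g n) ⁻¹' {Γ y n} := by
      ext g
      simp [hWdef, Nat.lt_succ_iff]
    rw [this]
    exact isOpen_biInter_finset fun n _ =>
      (continuous_apply n).isOpen_preimage _ (isOpen_discrete _)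
  have hU : IsOpen (Γ ⁻¹' W) := hcont.isOpen_preimage W hW
  rw [isOpen_induced_iff] at hU
  obtain ⟨V, hV, hVeq⟩ := hU
  have hyV : y.1 ∈ V := by
    have : y ∈ Γ ⁻¹' W := fun n _ => rfl
    rwa [← hVeq] at this
  obtain ⟨I, u, hu, hsub⟩ := isOpen_pi_iff.mp hV y.1 hyV
  -- the spliced function
  set f : ℕ → Bool := fun n => if n ∈ I then y.1 n else x'.1 n with hfdef
  have hinf : (toSet f).Infinite := by
    apply (x'.2.1.diff (I.finite_toSet)).mono
    intro n hn
    simp only [Set.mem_diff, Finset.mem_coe] at hn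
    simp only [toSet, Set.mem_setOf_eq, hfdef, if_neg hn.2]
    exact hn.1
  have hsubx : toSet f ⊆ x := by
    intro n hn
    simp only [toSet, Set.mem_setOf_eq, hfdef] at hn
    by_cases h : n ∈ I
    · rw [if_pos h] at hn; exact y.2.2 hn
    · rw [if_neg h] at hn; exact x'.2.2 hn
  set x'' : {f : ℕ → Bool // (toSet f).Infinite ∧ toSet f ⊆ x} := ⟨f, hinf, hsubx⟩
  have hx''V : x''.1 ∈ V := by
    apply hsub
    rw [Set.mem_pi]
    intro i hi
    simp only [Finset.mem_coe] at hi
    have : x''.1 i = y.1 i := by show (if i ∈ I then y.1 i else x'.1 i) = y.1 i; rw [if_pos hi]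
    rw [this]
    exact (hu i hi).2
  have hagree : ∀ n ≤ M, Γ x'' n = Γ y n := by
    have : x'' ∈ Γ ⁻¹' W := by rw [← hVeq]; exact hx''V
    exact this
  -- Γ y ⊆ Γ x''
  have hA : toSet (Γ y) ⊆ toSet (Γ x'') := by
    intro a ha
    have haM : a ≤ M := hM ha
    simp only [toSet, Set.mem_setOf_eq] at *
    rw [hagree a haM]; exact ha
  have hC : ∀ a ∈ toSet (Γ y), ∀ b ∈ toSet (Γ x'') \ toSet (Γ y), a < b := by
    intro a ha b hb
    by_contra hab
    push_neg at hab
    have hbM : b ≤ M := le_trans hab (hM ha)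
    have : Γ x'' b = Γ y b := hagree b hbM
    obtain ⟨hb1, hb2⟩ := hb
    simp only [toSet, Set.mem_setOf_eq] at hb1 hb2
    rw [this] at hb1
    exact hb2 hb1
  have heq : toSet (Γ y) = toSet (Γ x'') := by
    by_contra hne
    exact hinit y x'' ⟨hA, hne, hC⟩
  refine ⟨x'', ?_, ?_⟩
  · apply (I.finite_toSet).subset
    intro n hn
    simp only [Set.mem_symmDiff] at hn
    by_contra hnI
    simp only [Finset.mem_coe] at hnI
    have : f n = x'.1 n := by simp [hfdef, hnI]
    simp only [toSet, Set.mem_setOf_eq] at hn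
    rcases hn with ⟨h1, h2⟩ | ⟨h1, h2⟩
    · exact h2 (this ▸ h1)
    · exact h2 (show f n = true from this ▸ h1)
  · funext n
    have := Set.ext_iff.mp heq n
    simp only [toSet, Set.mem_setOf_eq] at this
    cases h1 : Γ x'' n <;> cases h2 : Γ y n <;> simp_all
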